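/- Let S be a finite set of vectors in ℝᵈ with positive definite sample covariance V(S), partitioned into nonempty sets G and Q, and let P be an orthogonal projection matrix on ℝᵈ. Then ‖P·V(S)^{−1/2}·(μ(G)−μ(S))‖₂² ≤ |Q|/|G|. -/

import Mathlib

/-- Sample mean of the vectors `y i` for `i` in a finite set `T`. -/
noncomputable def sampleMean {ι : Type*} {d : ℕ} (y : ι → Fin d → ℝ) (T : Finset ι) :
    Fin d → ℝ :=
  (T.card : ℝ)⁻¹ • ∑ i ∈ T, y i

/-- Sample covariance matrix of the vectors `y i` for `i` in a finite set `T`. -/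
noncomputable def sampleCov {ι : Type*} {d : ℕ} (y : ι → Fin d → ℝ) (T : Finset ι) :
    Matrix (Fin d) (Fin d) ℝ :=
  (T.card : ℝ)⁻¹ • ∑ i ∈ T,
    Matrix.vecMulVec (y i - sampleMean y T) (y i - sampleMean y T)

open Matrix Finset

lemma aux_sum_dot {ι : Type*} {d : ℕ} (T : Finset ι) (f : ι → Fin d → ℝ) (x : Fin d → ℝ) :
    (∑ i ∈ T, f i) ⬝ᵥ x = ∑ i ∈ T, f i ⬝ᵥ x := by
  induction T using Finset.cons_induction with
  | empty => simp
  | cons a s ha ih => simp [Finset.sum_cons, add_dotProduct, ih]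

lemma aux_quad {ι : Type*} {d : ℕ} (y : ι → Fin d → ℝ) (S : Finset ι) (x : Fin d → ℝ) :
    x ⬝ᵥ (sampleCov y S).mulVec x
      = (S.card : ℝ)⁻¹ * ∑ i ∈ S, ((y i - sampleMean y S) ⬝ᵥ x) ^ 2 := by
  have expand : ∀ w : Fin d → ℝ, x ⬝ᵥ (Matrix.vecMulVec w w).mulVec x = (w ⬝ᵥ x) ^ 2 := by
    intro w
    have hmv : (Matrix.vecMulVec w w).mulVec x = (w ⬝ᵥ x) • w := by
      ext j
      simp [Matrix.mulVec, Matrix.vecMulVec_apply, dotProduct, Finset.mul_sum,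
        mul_comm, mul_left_comm]
    rw [hmv, dotProduct_smul, smul_eq_mul, dotProduct_comm, pow_two]
  have hadd : ∀ (T : Finset ι) (A : ι → Matrix (Fin d) (Fin d) ℝ),
      x ⬝ᵥ (∑ i ∈ T, A i).mulVec x = ∑ i ∈ T, x ⬝ᵥ (A i).mulVec x := by
    intro T A
    induction T using Finset.cons_induction with
    | empty => simp
    | cons a s ha ih => simp [Finset.sum_cons, Matrix.add_mulVec, dotProduct_add, ih]
  rw [sampleCov, Matrix.smul_mulVec, dotProduct_smul, smul_eq_mul, hadd]
  congr 1
  exact Finset.sum_congr rfl fun i _ => expand _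

lemma aux_center_sum {ι : Type*} {d : ℕ} (y : ι → Fin d → ℝ) (S : Finset ι)
    (hS : S.Nonempty) : ∑ i ∈ S, (y i - sampleMean y S) = 0 := by
  have hc : (S.card : ℝ) ≠ 0 := Nat.cast_ne_zero.mpr hS.card_pos.ne'
  rw [Finset.sum_sub_distrib, Finset.sum_const, sampleMean, ← Nat.cast_smul_eq_nsmul ℝ,
    smul_smul, mul_inv_cancel₀ hc, one_smul, sub_self]

lemma aux_mean_diff {ι : Type*} {d : ℕ} (y : ι → Fin d → ℝ) (S G : Finset ι)
    (hG : G.Nonempty) :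
    sampleMean y G - sampleMean y S = (G.card : ℝ)⁻¹ • ∑ i ∈ G, (y i - sampleMean y S) := by
  have hc : (G.card : ℝ) ≠ 0 := Nat.cast_ne_zero.mpr hG.card_pos.ne'
  rw [Finset.sum_sub_distrib, Finset.sum_const, smul_sub, ← Nat.cast_smul_eq_nsmul ℝ,
    smul_smul, inv_mul_cancel₀ hc, one_smul, sampleMean]

lemma aux_dot {d : ℕ} (A : Matrix (Fin d) (Fin d) ℝ) (x : Fin d → ℝ) :
    (A.mulVec x) ⬝ᵥ (A.mulVec x) = x ⬝ᵥ ((Aᵀ * A).mulVec x) := by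
  rw [Matrix.dotProduct_mulVec, Matrix.vecMul_mulVec, ← Matrix.dotProduct_mulVec]

lemma aux_real (g q A B s : ℝ) (hg : 0 < g) (hq : 0 < q)
    (h1 : s ^ 2 ≤ g * A) (h2 : s ^ 2 ≤ q * B) :
    (g⁻¹ * s) ^ 2 ≤ q / g * ((g + q)⁻¹ * (A + B)) := by
  have hg' : g ≠ 0 := hg.ne'
  have hgq : g + q ≠ 0 := by positivity
  have e1 : (g⁻¹ * s) ^ 2 = s ^ 2 / g ^ 2 := by ring
  have e2 : q / g * ((g + q)⁻¹ * (A + B)) = q * (A + B) / (g * (g + q)) := by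
    field_simp
  rw [e1, e2, div_le_div_iff₀ (by positivity) (by positivity)]
  nlinarith [mul_le_mul_of_nonneg_right h1 hq.le, mul_le_mul_of_nonneg_right h2 hg.le]

theorem projected_whitened_mean_bound {ι : Type*} [DecidableEq ι] {d : ℕ}
    (y : ι → Fin d → ℝ) (S G Q : Finset ι) (hdisj : Disjoint G Q) (hS : S = G ∪ Q)
    (hG : G.Nonempty) (hQ : Q.Nonempty)
    (hV : (sampleCov y S).PosDef)
    (W : Matrix (Fin d) (Fin d) ℝ) (hW : W.PosDef)
    (hWVW : W * sampleCov y S * W = 1)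
    (P : Matrix (Fin d) (Fin d) ℝ) (hPsym : P.IsHermitian) (hPproj : P * P = P) :
    ∑ j, ((P.mulVec (W.mulVec (sampleMean y G - sampleMean y S))) j) ^ 2 ≤
      (Q.card : ℝ) / (G.card : ℝ) := by
  classical
  set V := sampleCov y S with hVdef
  set μS := sampleMean y S with hμS
  set m := sampleMean y G - sampleMean y S with hm
  set v := W.mulVec m with hv
  have hWsym : Wᵀ = W := by
    have := hW.isHermitian
    rwa [Matrix.IsHermitian, Matrix.conjTranspose_eq_transpose_of_trivial] at this
  have hPsymT : Pᵀ = P := by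
    rwa [Matrix.IsHermitian, Matrix.conjTranspose_eq_transpose_of_trivial] at hPsym
  have hg0 : (0 : ℝ) < G.card := by exact_mod_cast hG.card_pos
  have hq0 : (0 : ℝ) < Q.card := by exact_mod_cast hQ.card_pos
  have hcard : (S.card : ℝ) = G.card + Q.card := by
    rw [hS, Finset.card_union_of_disjoint hdisj]; push_cast; ring
  have hSne : S.Nonempty := hS ▸ hG.mono Finset.subset_union_left
  -- key quadratic-form inequality for every x
  have key : ∀ x : Fin d → ℝ,
      (m ⬝ᵥ x) ^ 2 ≤ (Q.card : ℝ) / G.card * (x ⬝ᵥ V.mulVec x) := by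
    intro x
    set a : ι → ℝ := fun i => (y i - μS) ⬝ᵥ x with ha
    have hsum0 : ∑ i ∈ S, a i = 0 := by
      rw [ha]
      simp only
      rw [← aux_sum_dot, hμS, aux_center_sum y S hSne, zero_dotProduct]
    have hsplit : ∑ i ∈ S, a i = ∑ i ∈ G, a i + ∑ i ∈ Q, a i := by
      rw [hS, Finset.sum_union hdisj]
    have hsplit2 : ∑ i ∈ S, a i ^ 2 = ∑ i ∈ G, a i ^ 2 + ∑ i ∈ Q, a i ^ 2 := by
      rw [hS, Finset.sum_union hdisj]
    have hmx : m ⬝ᵥ x = (G.card : ℝ)⁻¹ * ∑ i ∈ G, a i := by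
      rw [hm, aux_mean_diff y S G hG, smul_dotProduct, aux_sum_dot, smul_eq_mul]
    have hC1 : (∑ i ∈ G, a i) ^ 2 ≤ (G.card : ℝ) * ∑ i ∈ G, a i ^ 2 :=
      sq_sum_le_card_mul_sum_sq
    have hC2 : (∑ i ∈ G, a i) ^ 2 ≤ (Q.card : ℝ) * ∑ i ∈ Q, a i ^ 2 := by
      have hneg : ∑ i ∈ G, a i = -∑ i ∈ Q, a i := by linarith [hsum0, hsplit]
      rw [hneg, neg_pow]
      simpa using (sq_sum_le_card_mul_sum_sq (s := Q) (f := a))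
    have hquad : x ⬝ᵥ V.mulVec x = (S.card : ℝ)⁻¹ * ∑ i ∈ S, a i ^ 2 := aux_quad y S x
    rw [hmx, hquad, hcard, hsplit2]
    exact aux_real _ _ _ _ _ hg0 hq0 hC1 hC2
  set t := v ⬝ᵥ v with ht
  have ht0 : 0 ≤ t := by
    rw [ht, dotProduct]
    exact Finset.sum_nonneg fun j _ => mul_self_nonneg _
  have hxq : (W.mulVec v) ⬝ᵥ V.mulVec (W.mulVec v) = t := by
    rw [Matrix.dotProduct_mulVec, Matrix.vecMul_mulVec, ← Matrix.dotProduct_mulVec,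
      Matrix.mulVec_mulVec, hWsym, hWVW, Matrix.one_mulVec]
  have hmxv : m ⬝ᵥ (W.mulVec v) = t := by
    rw [Matrix.dotProduct_mulVec, ← Matrix.mulVec_transpose, hWsym, ← hv]
  have hkey := key (W.mulVec v)
  rw [hmxv, hxq] at hkey
  have htb : t ≤ (Q.card : ℝ) / G.card := by
    by_contra h
    push_neg at h
    have hc0 : 0 ≤ (Q.card : ℝ) / G.card := by positivity
    have htpos : 0 < t := lt_of_le_of_lt hc0 h
    nlinarith
  have hfin : ∑ j, (P.mulVec v j) ^ 2 = v ⬝ᵥ P.mulVec v := by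
    have h1 : ∑ j, (P.mulVec v j) ^ 2 = (P.mulVec v) ⬝ᵥ (P.mulVec v) := by
      simp [dotProduct, pow_two]
    rw [h1, aux_dot, hPsymT, hPproj]
  have hPle : v ⬝ᵥ P.mulVec v ≤ t := by
    have h2 : ((1 - P).mulVec v) ⬝ᵥ ((1 - P).mulVec v) = t - v ⬝ᵥ P.mulVec v := by
      rw [aux_dot]
      have h3 : (1 - P)ᵀ * (1 - P) = 1 - P := by
        rw [Matrix.transpose_sub, Matrix.transpose_one, hPsymT, Matrix.sub_mul,
          Matrix.mul_sub, Matrix.mul_sub, hPproj]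
        noncomm_ring
      rw [h3, Matrix.sub_mulVec, Matrix.one_mulVec, dotProduct_sub, ht]
    have h4 : 0 ≤ ((1 - P).mulVec v) ⬝ᵥ ((1 - P).mulVec v) := by
      rw [dotProduct]
      exact Finset.sum_nonneg fun j _ => mul_self_nonneg _
    linarith
  rw [hfin]
  linarith
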